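/- Let R ⊆ S be an inclusion of factors on a Hilbert space K with trivial relative commutant R' ∩ S = ℂ·1. Then there exist C*-subalgebras A_A ⊆ R and A_B ⊆ S' and a pure state ω on the C*-algebra A generated by A_A and A_B such that the GNS representation of ω is (up to unitary equivalence) the identity representation on K, with π(A_A)'' = R and π(A_B)'' = S'. -/

import Mathlib

/- STATEMENT 4: Every irreducible inclusion of factors R ⊆ S on a Hilbert space K arises
from a pure bipartite state: there are C*-subalgebras A_A ⊆ R and A_B ⊆ S' and a pure state
(a unit vector state whose GNS representation is the identity representation, i.e. the
vector is cyclic and the generated algebra acts irreducibly) with π(A_A)'' = R and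
π(A_B)'' = S'. -/

open scoped ComplexOrder

section Aux

variable {K : Type*} [NormedAddCommGroup K] [InnerProductSpace ℂ K] [CompleteSpace K]

lemma aux_isClosed_centralizer (s : Set (K →L[ℂ] K)) : IsClosed (Set.centralizer s) := by
  have : Set.centralizer s = ⋂ m ∈ s, {x : K →L[ℂ] K | m * x = x * m} := by
    ext x
    simp [Set.mem_centralizer_iff]
  rw [this]
  exact isClosed_biInter fun m _ =>
    isClosed_eq (continuous_const.mul continuous_id) (continuous_id.mul continuous_const)

lemma aux_range_subset_centralizer (s : Set (K →L[ℂ] K)) :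
    Set.range (fun c : ℂ => c • (1 : K →L[ℂ] K)) ⊆ Set.centralizer s := by
  rintro _ ⟨c, rfl⟩ m _
  simp [mul_smul_comm, smul_mul_assoc]

lemma aux_cyclic (A : StarSubalgebra ℂ (K →L[ℂ] K))
    (hA : Set.centralizer (A : Set (K →L[ℂ] K))
      = Set.range (fun c : ℂ => c • (1 : K →L[ℂ] K)))
    (Ω : K) (hΩ : Ω ≠ 0) :
    (Submodule.span ℂ
      ((fun T : K →L[ℂ] K => T Ω) '' (A : Set (K →L[ℂ] K)))).topologicalClosure = ⊤ := by
  set N : Submodule ℂ K :=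
    Submodule.span ℂ ((fun T : K →L[ℂ] K => T Ω) '' (A : Set (K →L[ℂ] K))) with hN
  set M : Submodule ℂ K := N.topologicalClosure with hM
  have hMclosed : IsClosed (M : Set K) := N.isClosed_topologicalClosure
  haveI : CompleteSpace M := hMclosed.completeSpace_coe
  -- invariance of N under A
  have hNinv : ∀ T ∈ A, ∀ x ∈ N, T x ∈ N := by
    intro T hT x hx
    have hmap : N.map (T : K →ₗ[ℂ] K) ≤ N := by
      rw [hN, Submodule.map_span]
      refine Submodule.span_le.2 ?_
      rintro _ ⟨_, ⟨U, hU, rfl⟩, rfl⟩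
      exact Submodule.subset_span ⟨T * U, mul_mem hT hU, rfl⟩
    exact hmap ⟨x, hx, rfl⟩
  -- invariance of M under A
  have hMinv : ∀ T ∈ A, ∀ x ∈ M, T x ∈ M := by
    intro T hT x hx
    have h1 : T '' (N : Set K) ⊆ (N : Set K) := by
      rintro _ ⟨z, hz, rfl⟩
      exact hNinv T hT z hz
    have h2 : T x ∈ closure (T '' (N : Set K)) :=
      image_closure_subset_closure_image T.continuous ⟨x, hx, rfl⟩
    exact closure_mono h1 h2
  -- the orthogonal projection onto M
  set P : K →L[ℂ] K := M.subtypeL.comp (Submodule.orthogonalProjectionOnto M) with hPdef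
  have hPapply : ∀ x : K, P x = (Submodule.orthogonalProjectionOnto M x : K) := fun _ => rfl
  have hPmem : ∀ x : K, P x ∈ M := fun x => (Submodule.orthogonalProjectionOnto M x).2
  have hPself : ∀ x ∈ M, P x = x := by
    intro x hx
    rw [hPapply]
    exact Submodule.starProjection_eq_self_iff.mpr hx
  have hPzero : ∀ x ∈ Mᗮ, P x = 0 := by
    intro x hx
    rw [hPapply, Submodule.orthogonalProjectionOnto_apply_of_mem_orthogonal hx,
      Submodule.coe_zero]
  -- P commutes with A
  have hP : P ∈ Set.centralizer (A : Set (K →L[ℂ] K)) := by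
    rw [Set.mem_centralizer_iff]
    intro T hT
    ext x
    have hu : P x ∈ M := hPmem x
    have hdx : x - P x ∈ Mᗮ := Submodule.sub_starProjection_mem_orthogonal (K := M) x
    have h1 : T (P x) ∈ M := hMinv T hT _ hu
    have h2 : T (x - P x) ∈ Mᗮ := by
      rw [Submodule.mem_orthogonal]
      intro m hm
      have hstar : (star T : K →L[ℂ] K) ∈ A := star_mem hT
      have hadj : (ContinuousLinearMap.adjoint T) m ∈ M := by
        rw [← ContinuousLinearMap.star_eq_adjoint]
        exact hMinv _ hstar m hm
      rw [← ContinuousLinearMap.adjoint_inner_left]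
      exact (Submodule.mem_orthogonal M _).1 hdx _ hadj
    have e1 : P (T x) = T (P x) := by
      have hx' : T x = T (P x) + T (x - P x) := by
        rw [← map_add]
        congr 1
        abel
      have pa : P (T (P x)) = T (P x) := hPself _ h1
      have pb : P (T (x - P x)) = 0 := hPzero _ h2
      rw [hx', map_add, pa, pb, add_zero]
    rw [ContinuousLinearMap.mul_apply, ContinuousLinearMap.mul_apply, e1]
  rw [hA] at hP
  obtain ⟨c, hc⟩ := hP
  -- Ω ∈ M
  have hΩM : Ω ∈ M := by
    have : Ω ∈ N := Submodule.subset_span ⟨(1 : K →L[ℂ] K), A.one_mem', by simp⟩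
    exact N.le_topologicalClosure this
  -- c = 1
  have hcΩ : c • Ω = Ω := by
    have h1 : P Ω = Ω := hPself Ω hΩM
    have h2 : P Ω = c • Ω := by rw [← hc]; simp
    rw [← h2, h1]
  have hc1 : c = 1 := by
    by_contra hne
    have : (c - 1) • Ω = 0 := by rw [sub_smul, one_smul, hcΩ, sub_self]
    rcases smul_eq_zero.1 this with h | h
    · exact hne (by linear_combination h)
    · exact hΩ h
  -- conclude
  rw [eq_top_iff]
  intro x _
  have : P x ∈ M := hPmem x
  have hPx : P x = x := by rw [← hc, hc1]; simp
  rwa [hPx] at this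

end Aux

theorem irreducible_subfactor_inclusion_from_pure_bipartite_state
    {K : Type*} [NormedAddCommGroup K] [InnerProductSpace ℂ K] [CompleteSpace K]
    [Nontrivial K]
    (R S : VonNeumannAlgebra K)
    (hRS : (R : Set (K →L[ℂ] K)) ⊆ (S : Set (K →L[ℂ] K)))
    (hRfactor : ∀ x ∈ (R : Set (K →L[ℂ] K)) ∩ Set.centralizer (R : Set (K →L[ℂ] K)),
      ∃ c : ℂ, x = c • (1 : K →L[ℂ] K))
    (hSfactor : ∀ x ∈ (S : Set (K →L[ℂ] K)) ∩ Set.centralizer (S : Set (K →L[ℂ] K)),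
      ∃ c : ℂ, x = c • (1 : K →L[ℂ] K))
    (hirr : Set.centralizer (R : Set (K →L[ℂ] K)) ∩ (S : Set (K →L[ℂ] K))
      = Set.range (fun c : ℂ => c • (1 : K →L[ℂ] K))) :
    ∃ (AA AB : StarSubalgebra ℂ (K →L[ℂ] K)),
      IsClosed (AA : Set (K →L[ℂ] K)) ∧ IsClosed (AB : Set (K →L[ℂ] K)) ∧
      (AA : Set (K →L[ℂ] K)) ⊆ (R : Set (K →L[ℂ] K)) ∧
      (AB : Set (K →L[ℂ] K)) ⊆ (S.commutant : Set (K →L[ℂ] K)) ∧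
      Set.centralizer (Set.centralizer (AA : Set (K →L[ℂ] K))) = (R : Set (K →L[ℂ] K)) ∧
      Set.centralizer (Set.centralizer (AB : Set (K →L[ℂ] K)))
        = (S.commutant : Set (K →L[ℂ] K)) ∧
      ∃ Ω : K, ‖Ω‖ = 1 ∧
        -- the vector Ω is cyclic for the C*-algebra generated by A_A and A_B, so the GNS
        -- representation of the associated vector state is the identity representation
        (Submodule.span ℂ
            ((fun T : K →L[ℂ] K => T Ω) ''
              ((AA ⊔ AB).topologicalClosure : Set (K →L[ℂ] K)))).topologicalClosure = ⊤ ∧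
        -- and the generated C*-algebra acts irreducibly, i.e. the vector state is pure
        Set.centralizer (((AA ⊔ AB).topologicalClosure : StarSubalgebra ℂ (K →L[ℂ] K)) :
            Set (K →L[ℂ] K))
          = Set.range (fun c : ℂ => c • (1 : K →L[ℂ] K)) := by
  set AA := R.toStarSubalgebra with hAAdef
  set AB := S.commutant.toStarSubalgebra with hABdef
  have hAAcoe : (AA : Set (K →L[ℂ] K)) = (R : Set (K →L[ℂ] K)) := rfl
  have hABcoe : (AB : Set (K →L[ℂ] K)) = (S.commutant : Set (K →L[ℂ] K)) := rfl
  have hABcen : (AB : Set (K →L[ℂ] K)) = Set.centralizer (S : Set (K →L[ℂ] K)) := by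
    rw [hABcoe, VonNeumannAlgebra.coe_commutant]
  -- the key irreducibility fact
  have hA : Set.centralizer (((AA ⊔ AB).topologicalClosure : StarSubalgebra ℂ (K →L[ℂ] K)) :
      Set (K →L[ℂ] K)) = Set.range (fun c : ℂ => c • (1 : K →L[ℂ] K)) := by
    apply Set.Subset.antisymm
    · intro x hx
      have hAAle : (AA : Set (K →L[ℂ] K)) ⊆
          (((AA ⊔ AB).topologicalClosure : StarSubalgebra ℂ (K →L[ℂ] K)) :
            Set (K →L[ℂ] K)) := fun y hy =>
        (AA ⊔ AB).le_topologicalClosure (le_sup_left (a := AA) (b := AB) hy)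
      have hABle : (AB : Set (K →L[ℂ] K)) ⊆
          (((AA ⊔ AB).topologicalClosure : StarSubalgebra ℂ (K →L[ℂ] K)) :
            Set (K →L[ℂ] K)) := fun y hy =>
        (AA ⊔ AB).le_topologicalClosure (le_sup_right (a := AA) (b := AB) hy)
      have hR' : x ∈ Set.centralizer (R : Set (K →L[ℂ] K)) := by
        rw [← hAAcoe]
        exact Set.centralizer_subset hAAle hx
      have hS : x ∈ (S : Set (K →L[ℂ] K)) := by
        have : x ∈ Set.centralizer (AB : Set (K →L[ℂ] K)) :=
          Set.centralizer_subset hABle hx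
        rw [hABcen] at this
        rwa [← S.centralizer_centralizer]
      rw [← hirr]
      exact ⟨hR', hS⟩
    · exact aux_range_subset_centralizer _
  refine ⟨AA, AB, ?_, ?_, ?_, ?_, ?_, ?_, ?_⟩
  · rw [hAAcoe, ← R.centralizer_centralizer]
    exact aux_isClosed_centralizer _
  · rw [hABcen]
    exact aux_isClosed_centralizer _
  · rw [hAAcoe]
  · rw [hABcoe]
  · rw [hAAcoe]; exact R.centralizer_centralizer
  · rw [hABcoe]; exact S.commutant.centralizer_centralizer
  · obtain ⟨v, hv⟩ := exists_ne (0 : K)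
    have hnv : ‖v‖ ≠ 0 := norm_ne_zero_iff.mpr hv
    refine ⟨‖v‖⁻¹ • v, ?_, ?_, hA⟩
    · rw [norm_smul, norm_inv, norm_norm, inv_mul_cancel₀ hnv]
    · exact aux_cyclic _ hA _ (smul_ne_zero (inv_ne_zero hnv) hv)
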